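/- Let (Ω, F, P) be a probability space, let I be a countable index set, and let {I_k}_{k=0}^∞ be independent and identically distributed set-valued random variables I_k : Ω → 2^I \ {∅} with sup_{ω,k} #(I_k(ω)) < ∞. Let I' ⊆ I be such that P({ω : i ∈ I_k(ω)}) > 0 for every i ∈ I'. Then P({ω ∈ Ω : I' ⊆ ⋃_{k=n}^∞ I_k(ω) for every n = 0,1,2,…}) = 1; that is, almost surely the realized control sequence is repetitive in I'. -/

import Mathlib

open MeasureTheory


set_option linter.unusedSectionVars false

section aux
variable {I : Type*} [Countable I] {Ω : Type*} [MeasurableSpace Ω] (μ : Measure Ω)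
  (Ik : ℕ → Ω → Finset I)

lemma aux_decompN (k : ℕ) (i : I) :
    {ω | i ∉ Ik k ω} = ⋃ (J : {J : Finset I // i ∉ J}), {ω | Ik k ω = (J : Finset I)} := by
  ext ω; simp only [Set.mem_setOf_eq, Set.mem_iUnion]
  exact ⟨fun h => ⟨⟨Ik k ω, h⟩, rfl⟩, by rintro ⟨⟨J, hJ⟩, rfl⟩; exact hJ⟩

variable (hmeas : ∀ (k : ℕ) (J : Finset I), MeasurableSet {ω | Ik k ω = J})
include hmeas

lemma aux_measN (k : ℕ) (i : I) : MeasurableSet {ω | i ∉ Ik k ω} := by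
  rw [aux_decompN]; exact MeasurableSet.iUnion fun J => hmeas k J

-- μ of the "not in" event as a tsum
lemma aux_muN (k : ℕ) (i : I) :
    μ {ω | i ∉ Ik k ω} = ∑' J : {J : Finset I // i ∉ J}, μ {ω | Ik k ω = (J : Finset I)} := by
  rw [aux_decompN]
  refine measure_iUnion ?_ fun J => hmeas k J
  intro J J' hJJ'
  refine Set.disjoint_left.mpr fun ω h h' => hJJ' ?_
  simp only [Set.mem_setOf_eq] at h h'
  exact Subtype.ext (h ▸ h')

lemma aux_key (hindep : ∀ (K : Finset ℕ) (J : ℕ → Finset I),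
      μ (⋂ k ∈ K, {ω | Ik k ω = J k}) = ∏ k ∈ K, μ {ω | Ik k ω = J k})
    (i : I) (K : Finset ℕ) :
    ∀ (L : Finset ℕ), Disjoint K L → ∀ g : ℕ → Finset I,
    μ ((⋂ l ∈ L, {ω | Ik l ω = g l}) ∩ ⋂ k ∈ K, {ω | i ∉ Ik k ω})
      = μ (⋂ l ∈ L, {ω | Ik l ω = g l}) * ∏ k ∈ K, μ {ω | i ∉ Ik k ω} := by
  induction K using Finset.induction_on with
  | empty => intro L _ g; simp
  | insert _ _ ha ih =>
    rename_i a K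
    intro L hdisj g
    have haL : a ∉ L := Finset.disjoint_left.mp hdisj (Finset.mem_insert_self a K)
    have hKL : Disjoint K L := hdisj.mono_left (Finset.subset_insert a K)
    have hKaL : Disjoint K (insert a L) := by
      rw [Finset.disjoint_insert_right]
      exact ⟨ha, hKL⟩
    -- rewrite the big intersection
    have e1 : (⋂ k ∈ insert a K, {ω | i ∉ Ik k ω})
        = {ω | i ∉ Ik a ω} ∩ ⋂ k ∈ K, {ω | i ∉ Ik k ω} := by
      simp [Set.biInter_insert]
    rw [e1, aux_decompN]
    have e2 : (⋂ l ∈ L, {ω | Ik l ω = g l}) ∩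
        ((⋃ (J : {J : Finset I // i ∉ J}), {ω | Ik a ω = (J : Finset I)}) ∩
          ⋂ k ∈ K, {ω | i ∉ Ik k ω})
        = ⋃ (J : {J : Finset I // i ∉ J}),
            ((⋂ l ∈ insert a L, {ω | Ik l ω = Function.update g a (J : Finset I) l}) ∩
              ⋂ k ∈ K, {ω | i ∉ Ik k ω}) := by
      rw [Set.iUnion_inter, Set.inter_iUnion]
      refine Set.iUnion_congr fun J => ?_
      rw [Finset.set_biInter_insert, Function.update_self]
      have : (⋂ l ∈ L, {ω | Ik l ω = Function.update g a (J : Finset I) l})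
          = ⋂ l ∈ L, {ω | Ik l ω = g l} := by
        refine Set.iInter₂_congr fun l hl => ?_
        rw [Function.update_of_ne (fun h => haL (by rwa [h] at hl))]
      rw [this]
      ext ω; simp only [Set.mem_inter_iff, Set.mem_iInter]; tauto
    rw [e2]
    have hdisjU : Pairwise (Function.onFun Disjoint fun J : {J : Finset I // i ∉ J} =>
        ((⋂ l ∈ insert a L, {ω | Ik l ω = Function.update g a (J : Finset I) l}) ∩
          ⋂ k ∈ K, {ω | i ∉ Ik k ω})) := by
      intro J J' hJJ'
      refine Set.disjoint_left.mpr fun ω h h' => hJJ' ?_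
      have h1 : ω ∈ ⋂ l ∈ insert a L, {ω | Ik l ω = Function.update g a (J : Finset I) l} := h.1
      have h2 : ω ∈ ⋂ l ∈ insert a L, {ω | Ik l ω = Function.update g a (J' : Finset I) l} := h'.1
      have e1 := Set.mem_iInter₂.mp h1 a (Finset.mem_insert_self a L)
      have e2 := Set.mem_iInter₂.mp h2 a (Finset.mem_insert_self a L)
      simp only [Set.mem_setOf_eq, Function.update_self] at e1 e2
      exact Subtype.ext (e1 ▸ e2)
    have hmeasU : ∀ J : {J : Finset I // i ∉ J}, MeasurableSet
        ((⋂ l ∈ insert a L, {ω | Ik l ω = Function.update g a (J : Finset I) l}) ∩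
          ⋂ k ∈ K, {ω | i ∉ Ik k ω}) := by
      intro J
      refine (MeasurableSet.biInter (Finset.countable_toSet _) fun l _ => hmeas _ _).inter
        (MeasurableSet.biInter (Finset.countable_toSet _) fun k _ => aux_measN Ik hmeas k i)
    rw [measure_iUnion hdisjU hmeasU]
    have term : ∀ J : {J : Finset I // i ∉ J},
        μ ((⋂ l ∈ insert a L, {ω | Ik l ω = Function.update g a (J : Finset I) l}) ∩
          ⋂ k ∈ K, {ω | i ∉ Ik k ω})
        = μ {ω | Ik a ω = (J : Finset I)} *
            (μ (⋂ l ∈ L, {ω | Ik l ω = g l}) * ∏ k ∈ K, μ {ω | i ∉ Ik k ω}) := by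
      intro J
      rw [ih (insert a L) hKaL (Function.update g a (J : Finset I))]
      have h3 : μ (⋂ l ∈ insert a L, {ω | Ik l ω = Function.update g a (J : Finset I) l})
          = μ {ω | Ik a ω = (J : Finset I)} * μ (⋂ l ∈ L, {ω | Ik l ω = g l}) := by
        rw [hindep (insert a L), Finset.prod_insert haL, Function.update_self, hindep L]
        congr 1
        refine Finset.prod_congr rfl fun l hl => ?_
        rw [Function.update_of_ne (fun h => haL (by rwa [h] at hl))]
      rw [h3, mul_assoc]
    rw [tsum_congr term, ENNReal.tsum_mul_right, ← aux_muN μ Ik hmeas a i,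
      Finset.prod_insert ha]
    ring
end aux

section main
variable {I : Type*} [Countable I] {Ω : Type*} [MeasurableSpace Ω] (μ : Measure Ω)
  [IsProbabilityMeasure μ] (Ik : ℕ → Ω → Finset I)
  (hmeas : ∀ (k : ℕ) (J : Finset I), MeasurableSet {ω | Ik k ω = J})
include hmeas

lemma aux_measP (k : ℕ) (i : I) : MeasurableSet {ω | i ∈ Ik k ω} := by
  have : {ω | i ∈ Ik k ω} = {ω | i ∉ Ik k ω}ᶜ := by ext ω; simp
  rw [this]; exact (aux_measN Ik hmeas k i).compl

lemma aux_const (hident : ∀ (k n : ℕ) (J : Finset I), μ {ω | Ik k ω = J} = μ {ω | Ik n ω = J})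
    (k : ℕ) (i : I) : μ {ω | i ∉ Ik k ω} = μ {ω | i ∉ Ik 0 ω} := by
  rw [aux_muN μ Ik hmeas k i, aux_muN μ Ik hmeas 0 i]
  exact tsum_congr fun J => hident k 0 (J : Finset I)

lemma aux_zero (hident : ∀ (k n : ℕ) (J : Finset I), μ {ω | Ik k ω = J} = μ {ω | Ik n ω = J})
    (hindep : ∀ (K : Finset ℕ) (J : ℕ → Finset I),
      μ (⋂ k ∈ K, {ω | Ik k ω = J k}) = ∏ k ∈ K, μ {ω | Ik k ω = J k})
    (i : I) (hp : 0 < μ {ω | i ∈ Ik 0 ω}) (n : ℕ) :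
    μ (⋂ k, ⋂ (_ : n ≤ k), {ω | i ∉ Ik k ω}) = 0 := by
  set q := μ {ω | i ∉ Ik 0 ω} with hq
  have hcompl : {ω | i ∉ Ik 0 ω} = {ω | i ∈ Ik 0 ω}ᶜ := by ext ω; simp
  have hq1 : q < 1 := by
    rw [hq, hcompl, measure_compl (aux_measP Ik hmeas 0 i) (measure_ne_top μ _),
      measure_univ]
    exact ENNReal.sub_lt_self ENNReal.one_ne_top one_ne_zero hp.ne'
  have hbound : ∀ m : ℕ, μ (⋂ k, ⋂ (_ : n ≤ k), {ω | i ∉ Ik k ω}) ≤ q ^ (m + 1) := by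
    intro m
    have hsub : (⋂ k, ⋂ (_ : n ≤ k), {ω | i ∉ Ik k ω})
        ⊆ ⋂ k ∈ Finset.Icc n (n + m), {ω | i ∉ Ik k ω} := by
      intro ω hω
      simp only [Set.mem_iInter] at hω ⊢
      intro k hk
      exact hω k (Finset.mem_Icc.mp hk).1
    refine (measure_mono hsub).trans ?_
    have : μ (⋂ k ∈ Finset.Icc n (n + m), {ω | i ∉ Ik k ω})
        = ∏ k ∈ Finset.Icc n (n + m), μ {ω | i ∉ Ik k ω} := by
      have := aux_key μ Ik hmeas hindep i (Finset.Icc n (n + m)) ∅ (by simp) (fun _ => ∅)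
      simpa using this
    rw [this]
    have : ∏ k ∈ Finset.Icc n (n + m), μ {ω | i ∉ Ik k ω} = q ^ (m + 1) := by
      rw [Finset.prod_congr rfl fun k _ => aux_const μ Ik hmeas hident k i,
        Finset.prod_const, Nat.card_Icc]
      congr 1; omega
    rw [this]
  have htend : Filter.Tendsto (fun m : ℕ => q ^ (m + 1)) Filter.atTop (nhds 0) := by
    exact (ENNReal.tendsto_pow_atTop_nhds_zero_of_lt_one hq1).comp (Filter.tendsto_add_atTop_nat 1)
  exact le_antisymm (ge_of_tendsto' htend hbound) zero_le

end main

/-- Lemma 5.3: a random control sequence is almost surely repetitive in the set `I'` of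
indices which are sampled with positive probability. -/
theorem stmt15 {I : Type*} [Countable I]
    {Ω : Type*} [MeasurableSpace Ω] (μ : Measure Ω) [IsProbabilityMeasure μ]
    (Ik : ℕ → Ω → Finset I)
    (hne : ∀ k ω, (Ik k ω).Nonempty)
    (M : ℕ) (hM : ∀ k ω, (Ik k ω).card ≤ M)
    (hmeas : ∀ (k : ℕ) (J : Finset I), MeasurableSet {ω | Ik k ω = J})
    -- identically distributed
    (hident : ∀ (k n : ℕ) (J : Finset I), μ {ω | Ik k ω = J} = μ {ω | Ik n ω = J})
    -- independent
    (hindep : ∀ (K : Finset ℕ) (J : ℕ → Finset I),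
      μ (⋂ k ∈ K, {ω | Ik k ω = J k}) = ∏ k ∈ K, μ {ω | Ik k ω = J k})
    (I' : Set I)
    (hpos : ∀ i ∈ I', ∀ k, 0 < μ {ω | i ∈ Ik k ω}) :
    μ {ω | ∀ n : ℕ, ∀ i ∈ I', ∃ k, n ≤ k ∧ i ∈ Ik k ω} = 1 := by
  have hT : {ω | ∀ n : ℕ, ∀ i ∈ I', ∃ k, n ≤ k ∧ i ∈ Ik k ω}
      = ⋂ (n : ℕ), ⋂ (i : I'), ⋃ (k : ℕ), ⋃ (_ : n ≤ k), {ω | (i : I) ∈ Ik k ω} := by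
    ext ω
    simp only [Set.mem_setOf_eq, Set.mem_iInter, Set.mem_iUnion, Subtype.forall]
    constructor
    · intro h n i hi
      obtain ⟨k, hk, hik⟩ := h n i hi
      exact ⟨k, hk, hik⟩
    · intro h n i hi
      obtain ⟨k, hk, hik⟩ := h n i hi
      exact ⟨k, hk, hik⟩
  rw [hT]
  have hmeasT : MeasurableSet
      (⋂ (n : ℕ), ⋂ (i : I'), ⋃ (k : ℕ), ⋃ (_ : n ≤ k), {ω | (i : I) ∈ Ik k ω}) := by
    refine MeasurableSet.iInter fun n => MeasurableSet.iInter fun i =>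
      MeasurableSet.iUnion fun k => MeasurableSet.iUnion fun _ => aux_measP Ik hmeas k i
  rw [← prob_compl_eq_zero_iff hmeasT]
  have hcompl : (⋂ (n : ℕ), ⋂ (i : I'), ⋃ (k : ℕ), ⋃ (_ : n ≤ k), {ω | (i : I) ∈ Ik k ω})ᶜ
      = ⋃ (n : ℕ), ⋃ (i : I'), ⋂ (k : ℕ), ⋂ (_ : n ≤ k), {ω | (i : I) ∉ Ik k ω} := by
    simp only [Set.compl_iInter, Set.compl_iUnion]
    refine Set.iUnion_congr fun n => Set.iUnion_congr fun i =>
      Set.iInter_congr fun k => Set.iInter_congr fun _ => ?_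
    ext ω; simp
  rw [hcompl]
  refine measure_iUnion_null fun n => measure_iUnion_null fun i => ?_
  exact aux_zero μ Ik hmeas hident hindep (i : I) (hpos i i.2 0) n
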